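/- Let X be the one-point compactification of an uncountable discrete space, let Y be a connected Hausdorff space that is not σ-compact, and let Z = X × Y. Then for any y ∈ Y, the quasi-component in Z of the compact set X × {y} is all of Z (i.e., the only clopen subset of Z containing X × {y} is Z itself), yet Z is not σ-compact. -/
import Mathlib


/-- `X` is zero-dimensional: it is nonempty and has a base consisting of clopen sets. -/
def ZeroDim (X : Type*) [TopologicalSpace X] : Prop :=
  Nonempty X ∧ ∀ (x : X) (U : Set X), IsOpen U → x ∈ U →
    ∃ C : Set X, IsClopen C ∧ x ∈ C ∧ C ⊆ U

/-- `𝒰` is a cover of `X` consisting of sets satisfying `P`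
(e.g. an open cover for `P = IsOpen`, a clopen cover for `P = IsClopen`). -/
def IsCover {X : Type*} (P : Set X → Prop) (𝒰 : Set (Set X)) : Prop :=
  (∀ U ∈ 𝒰, P U) ∧ ⋃₀ 𝒰 = Set.univ

/-- The selection principle `S_fin(P-covers, P-covers)`: for every sequence of
`P`-covers `u n` there are finite subsets `v n ⊆ u n` whose union is a cover. -/
def SelFin {X : Type*} (P : Set X → Prop) : Prop :=
  ∀ u : ℕ → Set (Set X), (∀ n, IsCover P (u n)) →
    ∃ v : ℕ → Set (Set X), (∀ n, (v n).Finite ∧ v n ⊆ u n) ∧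
      (⋃ n, ⋃₀ v n) = Set.univ

/-- Player ONE has a winning strategy in the selection game `G_fin(P-covers, P-covers)`:
a strategy `σ`, depending on TWO's previous moves, always playing `P`-covers, such that for
every sequence of legal responses by TWO (finite subsets of the cover just played),
the union of TWO's choices fails to cover. -/
def ONEWinsSel {X : Type*} (P : Set X → Prop) : Prop :=
  ∃ σ : List (Set (Set X)) → Set (Set X),
    (∀ h, IsCover P (σ h)) ∧
    ∀ v : ℕ → Set (Set X),
      (∀ n, (v n).Finite ∧ v n ⊆ σ (List.ofFn fun i : Fin n => v i)) →
      (⋃ n, ⋃₀ v n) ≠ Set.univ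

/-- Player TWO has a winning strategy in the selection game `G_fin(P-covers, P-covers)`:
a strategy `τ`, depending on ONE's moves so far, such that against every sequence of
`P`-covers played by ONE, TWO's responses are legal (finite subsets of the corresponding
cover) and their union is a cover. -/
def TWOWinsSel {X : Type*} (P : Set X → Prop) : Prop :=
  ∃ τ : List (Set (Set X)) → Set (Set X),
    ∀ u : ℕ → Set (Set X), (∀ n, IsCover P (u n)) →
      (∀ n, (τ (List.ofFn fun i : Fin (n + 1) => u i)).Finite ∧
        τ (List.ofFn fun i : Fin (n + 1) => u i) ⊆ u n) ∧
      (⋃ n, ⋃₀ τ (List.ofFn fun i : Fin (n + 1) => u i)) = Set.univ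

/-- Player ONE has a winning strategy in the `Q`-`R` game (in round `n`, ONE picks a set
`K n` with `Q (K n)` and TWO responds with a set `U n` with `R (U n)` and `K n ⊆ U n`;
ONE wins if `⋃ n, U n = univ`).  E.g. `Q = IsCompact`, `R = IsClopen` is the
compact-clopen game; `R = IsOpen` gives the compact-open game. -/
def ONEWinsCC {X : Type*} (Q R : Set X → Prop) : Prop :=
  ∃ σ : List (Set X) → Set X,
    (∀ h, Q (σ h)) ∧
    ∀ v : ℕ → Set X,
      (∀ n, R (v n) ∧ σ (List.ofFn fun i : Fin n => v i) ⊆ v n) →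
      (⋃ n, v n) = Set.univ

/-- Player TWO has a winning strategy in the `Q`-`R` game: a strategy `τ`, depending on
ONE's moves so far, such that against every sequence of sets satisfying `Q` played by ONE,
TWO's responses satisfy `R`, contain ONE's corresponding sets, and fail to cover `X`. -/
def TWOWinsCC {X : Type*} (Q R : Set X → Prop) : Prop :=
  ∃ τ : List (Set X) → Set X,
    ∀ u : ℕ → Set X, (∀ n, Q (u n)) →
      (∀ n, R (τ (List.ofFn fun i : Fin (n + 1) => u i)) ∧
        u n ⊆ τ (List.ofFn fun i : Fin (n + 1) => u i)) ∧
      (⋃ n, τ (List.ofFn fun i : Fin (n + 1) => u i)) ≠ Set.univ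

/-- A subset `K` of `X` is mildly compact if every cover of `K` by clopen subsets
of `X` contains a finite subcover. -/
def MildlyCompact {X : Type*} [TopologicalSpace X] (K : Set X) : Prop :=
  ∀ 𝒰 : Set (Set X), (∀ U ∈ 𝒰, IsClopen U) → K ⊆ ⋃₀ 𝒰 →
    ∃ 𝒱 ⊆ 𝒰, 𝒱.Finite ∧ K ⊆ ⋃₀ 𝒱

/-- The quasi-component of a subset `K` of `X`: the intersection of all clopen
subsets of `X` containing `K`. -/
def QuasiComp {X : Type*} [TopologicalSpace X] (K : Set X) : Set X :=
  ⋂₀ {C : Set X | IsClopen C ∧ K ⊆ C}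

/-- Let `X = OnePoint D` be the one-point compactification of an uncountable discrete
space `D`, let `Y` be a connected Hausdorff space which is not σ-compact, and
`Z = X × Y`.  Then for any `y ∈ Y` the quasi-component in `Z` of the compact set
`X × {y}` is all of `Z`, yet `Z` is not σ-compact. -/
theorem stmt17 (D : Type*) [TopologicalSpace D] [DiscreteTopology D] [Uncountable D]
    (Y : Type*) [TopologicalSpace Y] [ConnectedSpace Y] [T2Space Y]
    (hY : ¬ SigmaCompactSpace Y) (y : Y) :
    QuasiComp ((Set.univ : Set (OnePoint D)) ×ˢ ({y} : Set Y)) =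
      (Set.univ : Set (OnePoint D × Y)) ∧
    ¬ SigmaCompactSpace (OnePoint D × Y) := by
  constructor
  · apply Set.eq_univ_of_univ_subset
    intro z _ C hC
    obtain ⟨hCl, hK⟩ := hC
    have hcont : Continuous (fun y' : Y => (z.1, y')) := by continuity
    have hclopen : IsClopen ((fun y' : Y => (z.1, y')) ⁻¹' C) := hCl.preimage hcont
    have hy : y ∈ (fun y' : Y => (z.1, y')) ⁻¹' C := hK ⟨Set.mem_univ _, rfl⟩
    rcases isClopen_iff.mp hclopen with h | h
    · simp [h] at hy
    · have : z.2 ∈ (fun y' : Y => (z.1, y')) ⁻¹' C := h ▸ Set.mem_univ _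
      exact this
  · intro h
    apply hY
    rw [← isSigmaCompact_univ_iff]
    have h2 := (isSigmaCompact_univ (X := OnePoint D × Y)).image continuous_snd
    rwa [Set.image_univ, Prod.range_snd] at h2
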